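/- Let X = {1,…,n} and let T ∈ 𝒯_n be such that Γ(T) ≤ Γ(T') for all T' ∈ 𝒯_n. For some k ≥ 0 let X₁, X₂, X₃, X₄, Y₁,…,Y_k partition X such that: (i) X_i|(X−X_i) ∈ Σ(T) for all i ∈ {1,…,4}; (ii) Y_i|(X−Y_i) ∈ Σ(T) for all i ∈ {1,…,k}; and (iii) A_i|(X−A_i) ∈ Σ(T) for all i ∈ {0,…,k}, where A₀ = X₁∪X₂ and A_i = A_{i−1}∪Y_i. Writing x_i = |X_i|, either max(x₁,x₂) ≤ min(x₃,x₄) or max(x₃,x₄) ≤ min(x₁,x₂); that is, after relabelling X₁,…,X₄ compatibly with conditions (i)–(iii), one has x₁ ≤ x₂ ≤ x₃ ≤ x₄. -/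

import Mathlib

/-!
Formalization framework for unrooted binary phylogenetic trees on the
leaf set `Fin n`, encoded via their split systems (Buneman's
splits-equivalence theorem: a binary phylogenetic tree is uniquely
determined by its set of splits, which is a maximal pairwise-compatible
collection of proper bipartitions of the leaf set containing all
trivial splits).  A split `A | Aᶜ` is recorded by storing both of its
sides.
-/

/-- Two sides (subsets of leaves) are compatible: the corresponding
splits can coexist in a tree. -/
def SidesCompatible {n : ℕ} (A B : Finset (Fin n)) : Prop :=
  A ⊆ B ∨ B ⊆ A ∨ Disjoint A B ∨ A ∪ B = Finset.univ

/-- An unrooted binary phylogenetic tree on leaf set `Fin n`,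
represented by the set of sides of its splits. -/
structure PhyloTree (n : ℕ) where
  sides : Finset (Finset (Fin n))
  proper : ∀ A ∈ sides, A.Nonempty ∧ A ≠ Finset.univ
  compl_mem : ∀ A ∈ sides, Aᶜ ∈ sides
  singleton_mem : ∀ x : Fin n, {x} ∈ sides
  compatible : ∀ A ∈ sides, ∀ B ∈ sides, SidesCompatible A B
  maximal : ∀ A : Finset (Fin n), A.Nonempty → A ≠ Finset.univ →
    (∀ B ∈ sides, SidesCompatible A B) → A ∈ sides

namespace PhyloTree

variable {n : ℕ}

/-- The split system of the restricted tree `T|X`: two trees agree on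
`X` (i.e. `T|X = T'|X`) iff their restricted split systems agree. -/
def restrict (T : PhyloTree n) (X : Finset (Fin n)) : Finset (Finset (Fin n)) :=
  T.sides.image (· ∩ X)

/-- `Γ(T)`: the sum of `|A| * |B|` over all non-trivial splits `A|B` of
`T` (each unordered split is stored twice in `sides`, hence the
division by two, which is exact). -/
def gamma (T : PhyloTree n) : ℕ :=
  (∑ A ∈ T.sides.filter (fun A => 2 ≤ A.card ∧ 2 ≤ Aᶜ.card), A.card * Aᶜ.card) / 2

/-- A tree-rearrangement move: the deleted edge of `T` (recorded as the
unordered split it induces) together with the output tree. -/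
abbrev Move (n : ℕ) := Sym2 (Finset (Fin n)) × PhyloTree n

/-- The set of TBR operations on `T`: delete the edge inducing the
split `A | Aᶜ` and reconnect, obtaining a distinct tree `θ.2`.  The
defining property is that deleting the corresponding edges from `T`
and from `θ.2` yields the same forest, i.e. `A|Aᶜ` is a split of both
trees and the two restrictions agree. -/
def OTBR (T : PhyloTree n) : Set (Move n) :=
  { θ | θ.2 ≠ T ∧ ∃ A : Finset (Fin n),
      θ.1 = s(A, Aᶜ) ∧ A ∈ T.sides ∧ A ∈ θ.2.sides ∧
      T.restrict A = θ.2.restrict A ∧ T.restrict Aᶜ = θ.2.restrict Aᶜ }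

/-- SPR operations: TBR operations where one component `T|A` of the
bisection (the pruned subtree) is regrafted preserving its rooting,
i.e. `T|(A ∪ {x}) = θ(T)|(A ∪ {x})` for some (equivalently every) leaf
`x` of the other side. -/
def OSPR (T : PhyloTree n) : Set (Move n) :=
  { θ | θ ∈ T.OTBR ∧ ∃ A : Finset (Fin n), θ.1 = s(A, Aᶜ) ∧
      ∃ x ∈ Aᶜ, T.restrict (insert x A) = θ.2.restrict (insert x A) }

/-- The effect on sides of swapping the pendant subtrees `T|Y` and
`T|Z` (for disjoint clusters `Y`, `Z`). -/
def swapSide (Y Z A : Finset (Fin n)) : Finset (Fin n) :=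
  if Y ⊆ A ∧ Disjoint Z A then (A \ Y) ∪ Z
  else if Z ⊆ A ∧ Disjoint Y A then (A \ Z) ∪ Y
  else A

/-- NNI operations: SPR operations in which the pruned subtree `T|Y` is
swapped with a pendant subtree `T|Z` for some cluster `Z ≠ Y` of `T`. -/
def ONNI (T : PhyloTree n) : Set (Move n) :=
  { θ | θ ∈ T.OTBR ∧ ∃ Y Z : Finset (Fin n),
      θ.1 = s(Y, Yᶜ) ∧
      (∃ x ∈ Yᶜ, T.restrict (insert x Y) = θ.2.restrict (insert x Y)) ∧
      Z ∈ T.sides ∧ Z ≠ Y ∧ Disjoint Y Z ∧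
      θ.2.sides = T.sides.image (swapSide Y Z) }

/-- The TBR neighbourhood `N_TBR(T) = {θ(T) : θ ∈ O_TBR(T)}`. -/
def NTBR (T : PhyloTree n) : Set (PhyloTree n) := Prod.snd '' T.OTBR

/-- The SPR neighbourhood. -/
def NSPR (T : PhyloTree n) : Set (PhyloTree n) := Prod.snd '' T.OSPR

/-- The NNI neighbourhood. -/
def NNNI (T : PhyloTree n) : Set (PhyloTree n) := Prod.snd '' T.ONNI

/-- A caterpillar: every internal vertex (equivalently, every
tripartition of the leaves into three clusters) is adjacent to a
leaf. -/
def IsCaterpillar (T : PhyloTree n) : Prop :=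
  ∀ A B C : Finset (Fin n), A ∈ T.sides → B ∈ T.sides → C ∈ T.sides →
    Disjoint A B → Disjoint A C → Disjoint B C → A ∪ B ∪ C = Finset.univ →
    (A.card = 1 ∨ B.card = 1 ∨ C.card = 1)

/-- A complete (maximally balanced) tree. -/
def IsComplete (T : PhyloTree n) : Prop :=
  ∃ k : ℕ, 3 * 2 ^ k ≤ n ∧ n < 3 * 2 ^ (k + 1) ∧
    (∃ Y ∈ T.sides, Y.card = 2 ^ (k + 1)) ∧
    ∀ Y ∈ T.sides, 2 ≤ Y.card → Y.card ≤ 2 ^ (k + 1) →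
      ∃ Y₁ Y₂ : Finset (Fin n), Y₁ ∈ T.sides ∧ Y₂ ∈ T.sides ∧
        Disjoint Y₁ Y₂ ∧ Y₁ ∪ Y₂ = Y ∧
        ∃ j : ℕ, Y₁.card = 2 ^ j ∧ 2 ^ (j - 1) ≤ Y₂.card ∧ Y₂.card < 2 ^ (j + 1)

/-- The pendant subtree on the cluster `S` is perfectly balanced:
every cluster inside `S` with at least two leaves splits into two
equal-sized child clusters. -/
def PerfOn (T : PhyloTree n) (S : Finset (Fin n)) : Prop :=
  ∀ Y ∈ T.sides, Y ⊆ S → 2 ≤ Y.card →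
    ∃ Y₁ Y₂ : Finset (Fin n), Y₁ ∈ T.sides ∧ Y₂ ∈ T.sides ∧
      Disjoint Y₁ Y₂ ∧ Y₁ ∪ Y₂ = Y ∧ Y₁.card = Y₂.card

/-- A perfect tree: either `n = 2^k` and `T` is two perfectly balanced
rooted trees with `2^(k-1)` leaves joined by an edge, or
`n = 3·2^(k-1)` and `T` is three perfectly balanced rooted trees with
`2^(k-1)` leaves attached to a common vertex. -/
def IsPerfect (T : PhyloTree n) : Prop :=
  (∃ k : ℕ, n = 2 ^ k ∧ ∃ A ∈ T.sides,
      A.card = 2 ^ (k - 1) ∧ T.PerfOn A ∧ T.PerfOn Aᶜ) ∨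
  (∃ k : ℕ, n = 3 * 2 ^ (k - 1) ∧ ∃ A B C : Finset (Fin n),
      A ∈ T.sides ∧ B ∈ T.sides ∧ C ∈ T.sides ∧
      Disjoint A B ∧ Disjoint A C ∧ Disjoint B C ∧
      A ∪ B ∪ C = Finset.univ ∧
      A.card = 2 ^ (k - 1) ∧ B.card = 2 ^ (k - 1) ∧ C.card = 2 ^ (k - 1) ∧
      T.PerfOn A ∧ T.PerfOn B ∧ T.PerfOn C)

end PhyloTree

namespace SwapAux
open PhyloTree

open Finset

variable {n : ℕ} {Y Z B C : Finset (Fin n)}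

lemma disj_mem {s t : Finset (Fin n)} (h : Disjoint s t) (x : Fin n) : x ∈ s → x ∉ t :=
  fun a b => Finset.disjoint_left.1 h a b

lemma compat_symm (h : SidesCompatible B C) : SidesCompatible C B := by
  unfold SidesCompatible at *
  rcases h with h|h|h|h
  · exact Or.inr (Or.inl h)
  · exact Or.inl h
  · exact Or.inr (Or.inr (Or.inl h.symm))
  · exact Or.inr (Or.inr (Or.inr (by rw [Finset.union_comm]; exact h)))

variable (hY : Y.Nonempty) (hZ : Z.Nonempty) (hYZ : Disjoint Y Z)

include hY in
lemma not_c1_c2 (h : Y ⊆ B ∧ Disjoint Z B) : ¬ (Z ⊆ B ∧ Disjoint Y B) := by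
  rintro ⟨_, h2⟩
  obtain ⟨y, hy⟩ := hY
  exact Finset.disjoint_left.1 h2 hy (h.1 hy)

lemma swap_eq_pos (h : Y ⊆ B ∧ Disjoint Z B) : swapSide Y Z B = (B \ Y) ∪ Z := if_pos h

lemma swap_eq_neg (h1 : ¬(Y ⊆ B ∧ Disjoint Z B)) (h2 : Z ⊆ B ∧ Disjoint Y B) :
    swapSide Y Z B = (B \ Z) ∪ Y := by
  unfold swapSide; rw [if_neg h1, if_pos h2]

lemma swap_eq_id (h1 : ¬(Y ⊆ B ∧ Disjoint Z B)) (h2 : ¬(Z ⊆ B ∧ Disjoint Y B)) :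
    swapSide Y Z B = B := by
  unfold swapSide; rw [if_neg h1, if_neg h2]

include hY hZ hYZ in
lemma swap_comm : swapSide Y Z B = swapSide Z Y B := by
  by_cases h1 : Y ⊆ B ∧ Disjoint Z B
  · rw [swap_eq_pos h1, swap_eq_neg (Y := Z) (Z := Y) (not_c1_c2 hY h1) h1]
  · by_cases h2 : Z ⊆ B ∧ Disjoint Y B
    · rw [swap_eq_neg h1 h2, swap_eq_pos (Y := Z) (Z := Y) h2]
    · rw [swap_eq_id h1 h2, swap_eq_id (Y := Z) (Z := Y) h2 h1]

include hY hZ hYZ in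
lemma swap_compl : swapSide Y Z Bᶜ = (swapSide Y Z B)ᶜ := by
  by_cases h1 : Y ⊆ B ∧ Disjoint Z B
  · rw [swap_eq_pos h1]
    have h2 : Z ⊆ Bᶜ ∧ Disjoint Y Bᶜ := by
      constructor
      · intro x hx; simp [Finset.mem_compl]; exact Finset.disjoint_left.1 h1.2 hx
      · rw [Finset.disjoint_left]; intro x hx hc; exact (Finset.mem_compl.1 hc) (h1.1 hx)
    have hn1 : ¬(Y ⊆ Bᶜ ∧ Disjoint Z Bᶜ) := by
      rintro ⟨ha, _⟩
      obtain ⟨y, hy⟩ := hY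
      exact (Finset.mem_compl.1 (ha hy)) (h1.1 hy)
    rw [swap_eq_neg hn1 h2]
    ext x
    simp only [Finset.mem_union, Finset.mem_sdiff, Finset.mem_compl]
    have := disj_mem h1.2 x
    have := disj_mem hYZ x
    have hx1 : x ∈ Y → x ∈ B := fun h => h1.1 h
    have := disj_mem h2.2 x
    tauto
  · by_cases h2 : Z ⊆ B ∧ Disjoint Y B
    · rw [swap_eq_neg h1 h2]
      have h1' : Y ⊆ Bᶜ ∧ Disjoint Z Bᶜ := by
        constructor
        · intro x hx; simp [Finset.mem_compl]; exact Finset.disjoint_left.1 h2.2 hx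
        · rw [Finset.disjoint_left]; intro x hx hc; exact (Finset.mem_compl.1 hc) (h2.1 hx)
      rw [swap_eq_pos h1']
      ext x
      simp only [Finset.mem_union, Finset.mem_sdiff, Finset.mem_compl]
      have := disj_mem h2.2 x
      have := disj_mem hYZ x
      have hx2 : x ∈ Z → x ∈ B := fun h => h2.1 h
      tauto
    · rw [swap_eq_id h1 h2]
      have h1' : ¬(Y ⊆ Bᶜ ∧ Disjoint Z Bᶜ) := by
        rintro ⟨ha, hb⟩
        exact h2 ⟨fun x hx => by_contra fun hc => Finset.disjoint_left.1 hb hx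
            (Finset.mem_compl.2 hc),
          Finset.disjoint_left.2 fun x hx hb' => (Finset.mem_compl.1 (ha hx)) hb'⟩
      have h2' : ¬(Z ⊆ Bᶜ ∧ Disjoint Y Bᶜ) := by
        rintro ⟨ha, hb⟩
        exact h1 ⟨fun x hx => by_contra fun hc => Finset.disjoint_left.1 hb hx
            (Finset.mem_compl.2 hc),
          Finset.disjoint_left.2 fun x hx hb' => (Finset.mem_compl.1 (ha hx)) hb'⟩
      rw [swap_eq_id h1' h2']

include hY hZ hYZ in
lemma swap_invol : swapSide Y Z (swapSide Y Z B) = B := by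
  by_cases h1 : Y ⊆ B ∧ Disjoint Z B
  · rw [swap_eq_pos h1]
    have h2' : Z ⊆ (B \ Y) ∪ Z ∧ Disjoint Y ((B \ Y) ∪ Z) := by
      refine ⟨Finset.subset_union_right, ?_⟩
      rw [Finset.disjoint_left]
      intro x hx hm
      rcases Finset.mem_union.1 hm with hm | hm
      · exact (Finset.mem_sdiff.1 hm).2 hx
      · exact Finset.disjoint_left.1 hYZ hx hm
    have h1' : ¬(Y ⊆ (B \ Y) ∪ Z ∧ Disjoint Z ((B \ Y) ∪ Z)) := by
      rintro ⟨ha, hb⟩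
      obtain ⟨y, hy⟩ := hY
      rcases Finset.mem_union.1 (ha hy) with hm | hm
      · exact (Finset.mem_sdiff.1 hm).2 hy
      · exact Finset.disjoint_left.1 hYZ hy hm
    rw [swap_eq_neg h1' h2']
    ext x
    simp only [Finset.mem_union, Finset.mem_sdiff]
    have := disj_mem h1.2 x
    have hx1 : x ∈ Y → x ∈ B := fun h => h1.1 h
    tauto
  · by_cases h2 : Z ⊆ B ∧ Disjoint Y B
    · rw [swap_eq_neg h1 h2]
      have h1' : Y ⊆ (B \ Z) ∪ Y ∧ Disjoint Z ((B \ Z) ∪ Y) := by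
        refine ⟨Finset.subset_union_right, ?_⟩
        rw [Finset.disjoint_left]
        intro x hx hm
        rcases Finset.mem_union.1 hm with hm | hm
        · exact (Finset.mem_sdiff.1 hm).2 hx
        · exact Finset.disjoint_left.1 hYZ hm hx
      rw [swap_eq_pos h1']
      ext x
      simp only [Finset.mem_union, Finset.mem_sdiff]
      have := disj_mem h2.2 x
      have hx2 : x ∈ Z → x ∈ B := fun h => h2.1 h
      tauto
    · rw [swap_eq_id h1 h2, swap_eq_id h1 h2]

include hY hZ in
lemma swap_nonempty (hB : B.Nonempty) : (swapSide Y Z B).Nonempty := by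
  by_cases h1 : Y ⊆ B ∧ Disjoint Z B
  · rw [swap_eq_pos h1]; exact hZ.mono Finset.subset_union_right
  · by_cases h2 : Z ⊆ B ∧ Disjoint Y B
    · rw [swap_eq_neg h1 h2]
      exact hY.mono Finset.subset_union_right
    · rw [swap_eq_id h1 h2]; exact hB



variable (hB1 : B.Nonempty) (hB2 : B ≠ Finset.univ) (hC1 : C.Nonempty) (hC2 : C ≠ Finset.univ)

set_option linter.unusedSectionVars false

include hY hZ in
lemma aux1 (h1B : Y ⊆ B ∧ Disjoint Z B) (h1C : Y ⊆ C ∧ Disjoint Z C)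
    (hBC : SidesCompatible B C) :
    SidesCompatible (swapSide Y Z B) (swapSide Y Z C) := by
  rw [swap_eq_pos h1B, swap_eq_pos h1C]
  rcases hBC with h|h|h|h
  · exact Or.inl (Finset.union_subset_union
      (Finset.sdiff_subset_sdiff h Finset.Subset.rfl) Finset.Subset.rfl)
  · exact Or.inr (Or.inl (Finset.union_subset_union
      (Finset.sdiff_subset_sdiff h Finset.Subset.rfl) Finset.Subset.rfl))
  · obtain ⟨y, hy⟩ := hY
    exact absurd (h1C.1 hy) (disj_mem h y (h1B.1 hy))
  · obtain ⟨z, hz⟩ := hZ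
    have : z ∈ B ∪ C := h ▸ Finset.mem_univ z
    rcases Finset.mem_union.1 this with hm | hm
    · exact absurd hm (disj_mem h1B.2 z hz)
    · exact absurd hm (disj_mem h1C.2 z hz)

include hY hZ hYZ in
lemma aux2 (h1B : Y ⊆ B ∧ Disjoint Z B) (h2C : Z ⊆ C ∧ Disjoint Y C)
    (hBC : SidesCompatible B C) :
    SidesCompatible (swapSide Y Z B) (swapSide Y Z C) := by
  have hnc1C : ¬(Y ⊆ C ∧ Disjoint Z C) := by
    rintro ⟨ha, _⟩
    obtain ⟨y, hy⟩ := hY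
    exact disj_mem h2C.2 y hy (ha hy)
  rw [swap_eq_pos h1B, swap_eq_neg hnc1C h2C]
  rcases hBC with h|h|h|h
  · obtain ⟨y, hy⟩ := hY
    exact absurd (h (h1B.1 hy)) (disj_mem h2C.2 y hy)
  · obtain ⟨z, hz⟩ := hZ
    exact absurd (h (h2C.1 hz)) (disj_mem h1B.2 z hz)
  · refine Or.inr (Or.inr (Or.inl ?_))
    rw [Finset.disjoint_left]
    intro x hx hx'
    rcases Finset.mem_union.1 hx with hm | hm
    · rcases Finset.mem_union.1 hx' with hm' | hm'
      · exact disj_mem h x (Finset.mem_sdiff.1 hm).1 (Finset.mem_sdiff.1 hm').1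
      · exact (Finset.mem_sdiff.1 hm).2 hm'
    · rcases Finset.mem_union.1 hx' with hm' | hm'
      · exact (Finset.mem_sdiff.1 hm').2 hm
      · exact disj_mem hYZ x hm' hm
  · refine Or.inr (Or.inr (Or.inr ?_))
    rw [Finset.eq_univ_iff_forall]
    intro x
    have : x ∈ B ∪ C := h ▸ Finset.mem_univ x
    simp only [Finset.mem_union, Finset.mem_sdiff]
    rcases Finset.mem_union.1 this with hm | hm
    · by_cases hxy : x ∈ Y
      · exact Or.inr (Or.inr hxy)
      · exact Or.inl (Or.inl ⟨hm, hxy⟩)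
    · by_cases hxz : x ∈ Z
      · exact Or.inl (Or.inr hxz)
      · exact Or.inr (Or.inl ⟨hm, hxz⟩)

include hY hZ hYZ hB1 hB2 in
lemma aux3 (h1B : Y ⊆ B ∧ Disjoint Z B)
    (hnc1C : ¬(Y ⊆ C ∧ Disjoint Z C)) (hnc2C : ¬(Z ⊆ C ∧ Disjoint Y C))
    (hCY : SidesCompatible C Y) (hCZ : SidesCompatible C Z)
    (hBC : SidesCompatible B C) :
    SidesCompatible (swapSide Y Z B) (swapSide Y Z C) := by
  rw [swap_eq_pos h1B, swap_eq_id hnc1C hnc2C]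
  rcases hBC with hsub|hsub|hdisj|huniv
  · -- B ⊆ C
    have hYC : Y ⊆ C := h1B.1.trans hsub
    have hnd : ¬ Disjoint Z C := fun hd => hnc1C ⟨hYC, hd⟩
    rcases hCZ with h|h|h|h
    · obtain ⟨y, hy⟩ := hY
      exact absurd (h (hYC hy)) (disj_mem hYZ y hy)
    · refine Or.inl ?_
      intro x hx
      rcases Finset.mem_union.1 hx with hm | hm
      · exact hsub (Finset.mem_sdiff.1 hm).1
      · exact h hm
    · exact absurd h.symm hnd
    · refine Or.inr (Or.inr (Or.inr ?_))
      rw [Finset.eq_univ_iff_forall]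
      intro x
      have : x ∈ C ∪ Z := h ▸ Finset.mem_univ x
      rcases Finset.mem_union.1 this with hm | hm
      · exact Finset.mem_union.2 (Or.inr hm)
      · exact Finset.mem_union.2 (Or.inl (Finset.mem_union.2 (Or.inr hm)))
  · -- C ⊆ B
    rcases hCY with h|h|h|h
    · refine Or.inr (Or.inr (Or.inl ?_))
      rw [Finset.disjoint_left]
      intro x hx hx'
      rcases Finset.mem_union.1 hx with hm | hm
      · exact (Finset.mem_sdiff.1 hm).2 (h hx')
      · exact disj_mem hYZ x (h hx') hm
    · exact absurd ⟨h, Finset.disjoint_of_subset_right hsub h1B.2⟩ hnc1C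
    · refine Or.inr (Or.inl ?_)
      intro x hx
      exact Finset.mem_union.2 (Or.inl (Finset.mem_sdiff.2 ⟨hsub hx, disj_mem h x hx⟩))
    · refine absurd ?_ hB2
      rw [Finset.eq_univ_iff_forall]
      intro x
      have : x ∈ C ∪ Y := h ▸ Finset.mem_univ x
      rcases Finset.mem_union.1 this with hm | hm
      · exact hsub hm
      · exact h1B.1 hm
  · -- Disjoint B C
    rcases hCZ with h|h|h|h
    · exact Or.inr (Or.inl (h.trans Finset.subset_union_right))
    · exact absurd ⟨h, Finset.disjoint_of_subset_left h1B.1 hdisj⟩ hnc2C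
    · refine Or.inr (Or.inr (Or.inl ?_))
      rw [Finset.disjoint_left]
      intro x hx hx'
      rcases Finset.mem_union.1 hx with hm | hm
      · exact disj_mem hdisj x (Finset.mem_sdiff.1 hm).1 hx'
      · exact disj_mem h.symm x hm hx'
    · obtain ⟨b, hb⟩ := hB1
      have : b ∈ C ∪ Z := h ▸ Finset.mem_univ b
      rcases Finset.mem_union.1 this with hm | hm
      · exact absurd hm (disj_mem hdisj b hb)
      · exact absurd hm (disj_mem h1B.2.symm b hb)
  · -- B ∪ C = univ
    have hZC : Z ⊆ C := by
      intro z hz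
      have : z ∈ B ∪ C := huniv ▸ Finset.mem_univ z
      rcases Finset.mem_union.1 this with hm | hm
      · exact absurd hm (disj_mem h1B.2 z hz)
      · exact hm
    have hnd : ¬ Disjoint Y C := fun hd => hnc2C ⟨hZC, hd⟩
    rcases hCY with h|h|h|h
    · obtain ⟨z, hz⟩ := hZ
      exact absurd (h (hZC hz)) (disj_mem hYZ.symm z hz)
    · refine Or.inr (Or.inr (Or.inr ?_))
      rw [Finset.eq_univ_iff_forall]
      intro x
      by_cases hc : x ∈ C
      · exact Finset.mem_union.2 (Or.inr hc)
      · have hxb : x ∈ B := by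
          have : x ∈ B ∪ C := huniv ▸ Finset.mem_univ x
          rcases Finset.mem_union.1 this with hm | hm
          · exact hm
          · exact absurd hm hc
        exact Finset.mem_union.2 (Or.inl (Finset.mem_union.2 (Or.inl
          (Finset.mem_sdiff.2 ⟨hxb, fun hxy => hc (h hxy)⟩))))
    · exact absurd h.symm hnd
    · refine Or.inl ?_
      intro x hx
      rcases Finset.mem_union.1 hx with hm | hm
      · have : x ∈ C ∪ Y := h ▸ Finset.mem_univ x
        rcases Finset.mem_union.1 this with hm' | hm'
        · exact hm'
        · exact absurd hm' (Finset.mem_sdiff.1 hm).2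
      · exact hZC hm

include hY hZ hYZ hB1 hB2 hC1 hC2 in
lemma compat_swap (hBY : SidesCompatible B Y) (hBZ : SidesCompatible B Z)
    (hCY : SidesCompatible C Y) (hCZ : SidesCompatible C Z)
    (hBC : SidesCompatible B C) :
    SidesCompatible (swapSide Y Z B) (swapSide Y Z C) := by
  by_cases h1B : Y ⊆ B ∧ Disjoint Z B
  · by_cases h1C : Y ⊆ C ∧ Disjoint Z C
    · exact aux1 hY hZ h1B h1C hBC
    · by_cases h2C : Z ⊆ C ∧ Disjoint Y C
      · exact aux2 hY hZ hYZ h1B h2C hBC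
      · exact aux3 hY hZ hYZ hB1 hB2 h1B h1C h2C hCY hCZ hBC
  · by_cases h2B : Z ⊆ B ∧ Disjoint Y B
    · rw [swap_comm hY hZ hYZ (B := B), swap_comm hY hZ hYZ (B := C)]
      by_cases h2C : Z ⊆ C ∧ Disjoint Y C
      · exact aux1 hZ hY h2B h2C hBC
      · by_cases h1C : Y ⊆ C ∧ Disjoint Z C
        · exact aux2 hZ hY hYZ.symm h2B h1C hBC
        · exact aux3 hZ hY hYZ.symm hB1 hB2 h2B h2C h1C hCZ hCY hBC
    · by_cases h1C : Y ⊆ C ∧ Disjoint Z C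
      · exact compat_symm (aux3 hY hZ hYZ hC1 hC2 h1C h1B h2B hBY hBZ (compat_symm hBC))
      · by_cases h2C : Z ⊆ C ∧ Disjoint Y C
        · rw [swap_comm hY hZ hYZ (B := B), swap_comm hY hZ hYZ (B := C)]
          exact compat_symm (aux3 hZ hY hYZ.symm hC1 hC2 h2C h2B h1B hBZ hBY (compat_symm hBC))
        · rw [swap_eq_id h1B h2B, swap_eq_id h1C h2C]
          exact hBC

include hY hZ hYZ in
lemma swap_self_left : swapSide Y Z Y = Z := by
  rw [swap_eq_pos ⟨Finset.Subset.rfl, hYZ.symm⟩]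
  simp

include hY hZ hYZ in
lemma swap_self_right : swapSide Y Z Z = Y := by
  have h1 : ¬(Y ⊆ Z ∧ Disjoint Z Z) := by
    rintro ⟨ha, _⟩
    obtain ⟨y, hy⟩ := hY
    exact disj_mem hYZ y hy (ha hy)
  rw [swap_eq_neg h1 ⟨Finset.Subset.rfl, hYZ⟩]
  simp

include hY hZ hYZ hB2 in
lemma swap_ne_univ (hBne : B.Nonempty) : swapSide Y Z B ≠ Finset.univ := by
  intro h
  have h2 := swap_nonempty (Y := Y) hY hZ (Finset.nonempty_iff_ne_empty.2 (fun h => hB2 ((Finset.compl_eq_empty_iff _).1 h)))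
  rw [swap_compl hY hZ hYZ, h] at h2
  simp at h2

end SwapAux

namespace SwapAux
open PhyloTree Finset
variable {n : ℕ}

set_option maxHeartbeats 1000000 in
/-- The tree obtained from `T` by swapping the pendant subtrees on the
clusters `Y` and `Z`. -/
def swapTree (T : PhyloTree n) (Y Z : Finset (Fin n))
    (hYm : Y ∈ T.sides) (hZm : Z ∈ T.sides) (hYZ : Disjoint Y Z) : PhyloTree n := by
  have hY : Y.Nonempty := (T.proper Y hYm).1
  have hZ : Z.Nonempty := (T.proper Z hZm).1
  refine
  { sides := T.sides.image (swapSide Y Z)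
    proper := ?_
    compl_mem := ?_
    singleton_mem := ?_
    compatible := ?_
    maximal := ?_ }
  · rintro A hA
    obtain ⟨B, hB, rfl⟩ := Finset.mem_image.1 hA
    exact ⟨swap_nonempty hY hZ (T.proper B hB).1,
      swap_ne_univ hY hZ hYZ (T.proper B hB).2 (T.proper B hB).1⟩
  · rintro A hA
    obtain ⟨B, hB, rfl⟩ := Finset.mem_image.1 hA
    rw [← swap_compl hY hZ hYZ]
    exact Finset.mem_image.2 ⟨Bᶜ, T.compl_mem B hB, rfl⟩
  · intro x
    by_cases hx1 : Y = {x}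
    · refine Finset.mem_image.2 ⟨Z, hZm, ?_⟩
      rw [swap_self_right hY hZ hYZ, hx1]
    · by_cases hx2 : Z = {x}
      · refine Finset.mem_image.2 ⟨Y, hYm, ?_⟩
        rw [swap_self_left hY hZ hYZ, hx2]
      · refine Finset.mem_image.2 ⟨{x}, T.singleton_mem x, ?_⟩
        have h1 : ¬(Y ⊆ {x} ∧ Disjoint Z {x}) := by
          rintro ⟨ha, _⟩
          exact hx1 (Finset.Nonempty.subset_singleton_iff hY |>.1 ha)
        have h2 : ¬(Z ⊆ {x} ∧ Disjoint Y {x}) := by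
          rintro ⟨ha, _⟩
          exact hx2 (Finset.Nonempty.subset_singleton_iff hZ |>.1 ha)
        exact swap_eq_id h1 h2
  · rintro A hA A' hA'
    obtain ⟨B, hB, rfl⟩ := Finset.mem_image.1 hA
    obtain ⟨C, hC, rfl⟩ := Finset.mem_image.1 hA'
    exact compat_swap hY hZ hYZ (T.proper B hB).1 (T.proper B hB).2
      (T.proper C hC).1 (T.proper C hC).2
      (T.compatible B hB Y hYm) (T.compatible B hB Z hZm)
      (T.compatible C hC Y hYm) (T.compatible C hC Z hZm)
      (T.compatible B hB C hC)
  · intro D hD1 hD2 hD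
    have hYi : Y ∈ T.sides.image (swapSide Y Z) :=
      Finset.mem_image.2 ⟨Z, hZm, swap_self_right hY hZ hYZ⟩
    have hZi : Z ∈ T.sides.image (swapSide Y Z) :=
      Finset.mem_image.2 ⟨Y, hYm, swap_self_left hY hZ hYZ⟩
    have hDY : SidesCompatible D Y := hD Y hYi
    have hDZ : SidesCompatible D Z := hD Z hZi
    have hD'1 : (swapSide Y Z D).Nonempty := swap_nonempty hY hZ hD1
    have hD'2 : swapSide Y Z D ≠ Finset.univ := swap_ne_univ hY hZ hYZ hD2 hD1
    have hmem : swapSide Y Z D ∈ T.sides := by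
      refine T.maximal _ hD'1 hD'2 ?_
      intro B hB
      have hσB : swapSide Y Z B ∈ T.sides.image (swapSide Y Z) :=
        Finset.mem_image.2 ⟨B, hB, rfl⟩
      have hBp := T.proper B hB
      have hσB1 : (swapSide Y Z B).Nonempty := swap_nonempty hY hZ hBp.1
      have hσB2 : swapSide Y Z B ≠ Finset.univ := swap_ne_univ hY hZ hYZ hBp.2 hBp.1
      have hσBY : SidesCompatible (swapSide Y Z B) Y := by
        have h' := compat_swap hY hZ hYZ hBp.1 hBp.2 hZ (T.proper Z hZm).2
          (T.compatible B hB Y hYm) (T.compatible B hB Z hZm)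
          (T.compatible Z hZm Y hYm) (Or.inl Finset.Subset.rfl)
          (T.compatible B hB Z hZm)
        rwa [swap_self_right hY hZ hYZ] at h'
      have hσBZ : SidesCompatible (swapSide Y Z B) Z := by
        have h' := compat_swap hY hZ hYZ hBp.1 hBp.2 hY (T.proper Y hYm).2
          (T.compatible B hB Y hYm) (T.compatible B hB Z hZm)
          (Or.inl Finset.Subset.rfl) (T.compatible Y hYm Z hZm)
          (T.compatible B hB Y hYm)
        rwa [swap_self_left hY hZ hYZ] at h' 
      have := compat_swap hY hZ hYZ hD1 hD2 hσB1 hσB2 hDY hDZ hσBY hσBZ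
        (hD _ hσB)
      rwa [swap_invol hY hZ hYZ] at this
    refine Finset.mem_image.2 ⟨swapSide Y Z D, hmem, ?_⟩
    exact swap_invol hY hZ hYZ

lemma swapTree_sides (T : PhyloTree n) (Y Z : Finset (Fin n))
    (hYm : Y ∈ T.sides) (hZm : Z ∈ T.sides) (hYZ : Disjoint Y Z) :
    (swapTree T Y Z hYm hZm hYZ).sides = T.sides.image (swapSide Y Z) := rfl

/-- The weight of a side in the `Γ` sum. -/
def gfun {n : ℕ} (B : Finset (Fin n)) : ℕ :=
  if 2 ≤ B.card ∧ 2 ≤ Bᶜ.card then B.card * Bᶜ.card else 0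

lemma gamma_eq_sum (T : PhyloTree n) : T.gamma = (∑ B ∈ T.sides, gfun B) / 2 := by
  unfold PhyloTree.gamma gfun
  rw [Finset.sum_filter]

lemma gfun_compl (B : Finset (Fin n)) : gfun Bᶜ = gfun B := by
  unfold gfun
  rw [compl_compl]
  by_cases h : 2 ≤ B.card ∧ 2 ≤ Bᶜ.card
  · rw [if_pos ⟨h.2, h.1⟩, if_pos h, Nat.mul_comm]
  · rw [if_neg (fun h' => h ⟨h'.2, h'.1⟩), if_neg h]

set_option maxHeartbeats 1000000 in
lemma swap_ineq {n : ℕ} (k : ℕ) (T : PhyloTree n)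
    (hmin : ∀ T' : PhyloTree n, T.gamma ≤ T'.gamma)
    (Y W Z V : Finset (Fin n)) (Ys : ℕ → Finset (Fin n)) (A : ℕ → Finset (Fin n))
    (hYm : Y ∈ T.sides) (hWm : W ∈ T.sides) (hZm : Z ∈ T.sides) (hVm : V ∈ T.sides)
    (hAm : ∀ t ≤ k, A t ∈ T.sides)
    (hYsm : ∀ i < k, Ys i ∈ T.sides)
    (hYW : Disjoint Y W) (hYZ : Disjoint Y Z) (hYV : Disjoint Y V)
    (hWZ : Disjoint W Z) (hWV : Disjoint W V) (hZV : Disjoint Z V)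
    (hYsY : ∀ i < k, Disjoint (Ys i) Y) (hYsW : ∀ i < k, Disjoint (Ys i) W)
    (hYsZ : ∀ i < k, Disjoint (Ys i) Z) (hYsV : ∀ i < k, Disjoint (Ys i) V)
    (hYsd : ∀ i < k, ∀ j < k, i ≠ j → Disjoint (Ys i) (Ys j))
    (hA0 : A 0 = Y ∪ W)
    (hAs : ∀ i < k, A (i+1) = A i ∪ Ys i)
    (hcov : ∀ x : Fin n, x ∈ Y ∨ x ∈ W ∨ x ∈ Z ∨ x ∈ V ∨ ∃ i < k, x ∈ Ys i) :
    ∑ t ∈ Finset.range (k+1), ((A t).card : ℤ) * (n - (A t).card) ≤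
      ∑ t ∈ Finset.range (k+1),
        (((A t).card : ℤ) + Z.card - Y.card) *
          (n - (((A t).card : ℤ) + Z.card - Y.card)) := by
  have hYne : Y.Nonempty := (T.proper Y hYm).1
  have hWne : W.Nonempty := (T.proper W hWm).1
  have hZne : Z.Nonempty := (T.proper Z hZm).1
  have hVne : V.Nonempty := (T.proper V hVm).1
  have hYsne : ∀ i < k, (Ys i).Nonempty := fun i hi => (T.proper _ (hYsm i hi)).1
  -- chain facts
  have hmono : ∀ s t : ℕ, s ≤ t → t ≤ k → A s ⊆ A t := by
    intro s t hst
    induction hst with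
    | refl => intro _; exact Finset.Subset.rfl
    | @step m hm ih =>
      intro hmk
      refine (ih (by omega)).trans ?_
      rw [hAs m (by omega)]
      exact Finset.subset_union_left
  have hYA : ∀ t ≤ k, Y ⊆ A t := fun t ht =>
    (hA0 ▸ Finset.subset_union_left).trans (hmono 0 t (Nat.zero_le t) ht)
  have hWA : ∀ t ≤ k, W ⊆ A t := fun t ht =>
    (hA0 ▸ Finset.subset_union_right).trans (hmono 0 t (Nat.zero_le t) ht)
  have hZA : ∀ t ≤ k, Disjoint Z (A t) := by
    intro t
    induction t with
    | zero => intro _; rw [hA0]; exact Finset.disjoint_union_right.2 ⟨hYZ.symm, hWZ.symm⟩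
    | succ m ih =>
      intro hmk
      rw [hAs m (by omega)]
      exact Finset.disjoint_union_right.2 ⟨ih (by omega), (hYsZ m (by omega)).symm⟩
  have hVA : ∀ t ≤ k, Disjoint V (A t) := by
    intro t
    induction t with
    | zero => intro _; rw [hA0]; exact Finset.disjoint_union_right.2 ⟨hYV.symm, hWV.symm⟩
    | succ m ih =>
      intro hmk
      rw [hAs m (by omega)]
      exact Finset.disjoint_union_right.2 ⟨ih (by omega), (hYsV m (by omega)).symm⟩
  have hYsA : ∀ i < k, ∀ t ≤ i, Disjoint (Ys i) (A t) := by
    intro i hik t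
    induction t with
    | zero => intro _; rw [hA0]; exact Finset.disjoint_union_right.2 ⟨hYsY i hik, hYsW i hik⟩
    | succ m ih =>
      intro hmi
      rw [hAs m (by omega)]
      exact Finset.disjoint_union_right.2 ⟨ih (by omega), hYsd i hik m (by omega) (by omega)⟩
  have hAk : ∀ x : Fin n, x ∉ Z → x ∉ V → x ∈ A k := by
    intro x hxZ hxV
    rcases hcov x with h|h|h|h|⟨i, hik, h⟩
    · exact hYA k le_rfl h
    · exact hWA k le_rfl h
    · exact absurd h hxZ
    · exact absurd h hxV
    · refine hmono (i+1) k (by omega) le_rfl ?_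
      rw [hAs i hik]
      exact Finset.mem_union_right _ h
  -- the characterisation of sides containing Y and avoiding Z
  have hchain : ∀ B ∈ T.sides, Y ⊆ B → Disjoint Z B →
      ∀ t ≤ k, A t ⊆ B → B = Zᶜ ∨ ∃ s ≤ k, B = A s := by
    intro B hB hYB hZB
    have hBnotZ : ∀ x, x ∈ B → x ∉ Z := fun x hx hz => disj_mem hZB x hz hx
    suffices key : ∀ m t, t ≤ k → k - t ≤ m → A t ⊆ B → B = Zᶜ ∨ ∃ s ≤ k, B = A s by
      intro t htk hsub
      exact key k t htk (by omega) hsub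
    intro m
    induction m with
    | zero =>
      intro t htk hm hsub
      have htk' : t = k := by omega
      subst htk'
      rcases T.compatible B hB V hVm with h|h|h|h
      · obtain ⟨y, hy⟩ := hYne
        exact absurd (h (hYB hy)) (disj_mem hYV y hy)
      · refine Or.inl (Finset.ext fun x => ?_)
        rw [Finset.mem_compl]
        constructor
        · intro hx
          exact hBnotZ x hx
        · intro hx
          by_cases hv : x ∈ V
          · exact h hv
          · exact hsub (hAk x hx hv)
      · refine Or.inr ⟨t, le_rfl, Finset.Subset.antisymm ?_ hsub⟩
        intro x hx
        exact hAk x (hBnotZ x hx) (disj_mem h x hx)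
      · obtain ⟨z, hz⟩ := hZne
        have : z ∈ B ∪ V := h ▸ Finset.mem_univ z
        rcases Finset.mem_union.1 this with hm' | hm'
        · exact (hBnotZ z hm' hz).elim
        · exact (disj_mem hZV z hz hm').elim
    | succ m ih =>
      intro t htk hm hsub
      by_cases hmt : k - t ≤ m
      · exact ih t htk hmt hsub
      · have htlt : t < k := by omega
        rcases T.compatible B hB (Ys t) (hYsm t htlt) with h|h|h|h
        · obtain ⟨y, hy⟩ := hYne
          exact absurd (h (hYB hy)) (fun hc => disj_mem (hYsY t htlt) y hc hy)
        · refine ih (t+1) (by omega) (by omega) ?_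
          rw [hAs t htlt]
          exact Finset.union_subset hsub h
        · rcases T.compatible B hB (A (t+1)) (hAm (t+1) (by omega)) with h2|h2|h2|h2
          · refine Or.inr ⟨t, htk, Finset.Subset.antisymm ?_ hsub⟩
            intro x hx
            have := h2 hx
            rw [hAs t htlt] at this
            rcases Finset.mem_union.1 this with hm' | hm'
            · exact hm'
            · exact absurd hm' (disj_mem h x hx)
          · obtain ⟨u, hu⟩ := hYsne t htlt
            refine absurd (h2 ?_) (fun hc => disj_mem h u hc hu)
            rw [hAs t htlt]
            exact Finset.mem_union_right _ hu
          · obtain ⟨y, hy⟩ := hYne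
            exact absurd (hYA (t+1) (by omega) hy) (disj_mem h2 y (hYB hy))
          · obtain ⟨z, hz⟩ := hZne
            have : z ∈ B ∪ A (t+1) := h2 ▸ Finset.mem_univ z
            rcases Finset.mem_union.1 this with hm' | hm'
            · exact (hBnotZ z hm' hz).elim
            · exact (disj_mem (hZA (t+1) (by omega)) z hz hm').elim
        · obtain ⟨z, hz⟩ := hZne
          have : z ∈ B ∪ Ys t := h ▸ Finset.mem_univ z
          rcases Finset.mem_union.1 this with hm' | hm'
          · exact (hBnotZ z hm' hz).elim
          · exact (disj_mem (hYsZ t htlt) z hm' hz).elim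
  have hchar : ∀ B ∈ T.sides, Y ⊆ B → Disjoint Z B →
      B = Y ∨ B = Zᶜ ∨ ∃ t ≤ k, B = A t := by
    intro B hB hYB hZB
    rcases T.compatible B hB (A 0) (hAm 0 (Nat.zero_le k)) with h|h|h|h
    · rcases T.compatible B hB W hWm with h2|h2|h2|h2
      · obtain ⟨y, hy⟩ := hYne
        exact absurd (h2 (hYB hy)) (disj_mem hYW y hy)
      · refine Or.inr (Or.inr ⟨0, Nat.zero_le k, Finset.Subset.antisymm h ?_⟩)
        rw [hA0]
        exact Finset.union_subset hYB h2
      · refine Or.inl (Finset.Subset.antisymm ?_ hYB)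
        intro x hx
        have := h hx
        rw [hA0] at this
        rcases Finset.mem_union.1 this with hm' | hm'
        · exact hm'
        · exact absurd hm' (disj_mem h2 x hx)
      · obtain ⟨z, hz⟩ := hZne
        have : z ∈ B ∪ W := h2 ▸ Finset.mem_univ z
        rcases Finset.mem_union.1 this with hm' | hm'
        · exact (disj_mem hZB z hz hm').elim
        · exact (disj_mem hWZ z hm' hz).elim
    · exact Or.inr (hchain B hB hYB hZB 0 (Nat.zero_le k) h)
    · obtain ⟨y, hy⟩ := hYne
      exact absurd (hYA 0 (Nat.zero_le k) hy) (disj_mem h y (hYB hy))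
    · obtain ⟨z, hz⟩ := hZne
      have : z ∈ B ∪ A 0 := h ▸ Finset.mem_univ z
      rcases Finset.mem_union.1 this with hm' | hm'
      · exact (disj_mem hZB z hz hm').elim
      · exact (disj_mem (hZA 0 (Nat.zero_le k)) z hz hm').elim
  classical
  by_contra hlt
  push_neg at hlt
  set σ := swapSide Y Z with hσ
  -- cards of the chain sides and their swaps
  have hcard1 : ∀ t ≤ k, gfun (A t) = (A t).card * (n - (A t).card) := by
    intro t ht
    have h1 : 2 ≤ (A t).card := by
      have : Y ∪ W ⊆ A t := Finset.union_subset (hYA t ht) (hWA t ht)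
      calc 2 ≤ Y.card + W.card := by
              have := Finset.card_pos.2 hYne
              have := Finset.card_pos.2 hWne
              omega
        _ = (Y ∪ W).card := (Finset.card_union_of_disjoint hYW).symm
        _ ≤ (A t).card := Finset.card_le_card this
    have h2 : Z ∪ V ⊆ (A t)ᶜ := by
      intro x hx
      rw [Finset.mem_compl]
      rcases Finset.mem_union.1 hx with h|h
      · exact disj_mem (hZA t ht) x h
      · exact disj_mem (hVA t ht) x h
    have h3 : 2 ≤ (A t)ᶜ.card := by
      calc 2 ≤ Z.card + V.card := by
              have := Finset.card_pos.2 hZne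
              have := Finset.card_pos.2 hVne
              omega
        _ = (Z ∪ V).card := (Finset.card_union_of_disjoint hZV).symm
        _ ≤ (A t)ᶜ.card := Finset.card_le_card h2
    rw [gfun, if_pos ⟨h1, h3⟩, Finset.card_compl, Fintype.card_fin]
  have hswapA : ∀ t ≤ k, σ (A t) = (A t \ Y) ∪ Z := fun t ht =>
    swap_eq_pos ⟨hYA t ht, hZA t ht⟩
  have hcard2 : ∀ t ≤ k, (σ (A t)).card = (A t).card - Y.card + Z.card := by
    intro t ht
    rw [hswapA t ht, Finset.card_union_of_disjoint
      (Finset.disjoint_of_subset_left Finset.sdiff_subset (hZA t ht).symm),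
      Finset.card_sdiff_of_subset (hYA t ht)]
  have hcard3 : ∀ t ≤ k, gfun (σ (A t)) =
      ((A t).card - Y.card + Z.card) * (n - ((A t).card - Y.card + Z.card)) := by
    intro t ht
    have hWsub : W ∪ Z ⊆ σ (A t) := by
      rw [hswapA t ht]
      refine Finset.union_subset ?_ Finset.subset_union_right
      intro x hx
      exact Finset.mem_union_left _ (Finset.mem_sdiff.2 ⟨hWA t ht hx, disj_mem hYW.symm x hx⟩)
    have h1 : 2 ≤ (σ (A t)).card := by
      calc 2 ≤ W.card + Z.card := by
              have := Finset.card_pos.2 hWne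
              have := Finset.card_pos.2 hZne
              omega
        _ = (W ∪ Z).card := (Finset.card_union_of_disjoint hWZ).symm
        _ ≤ _ := Finset.card_le_card hWsub
    have hYVsub : Y ∪ V ⊆ (σ (A t))ᶜ := by
      rw [hswapA t ht]
      intro x hx
      rw [Finset.mem_compl, Finset.mem_union, Finset.mem_sdiff]
      rcases Finset.mem_union.1 hx with h|h
      · rintro (⟨-, hc⟩ | hc)
        · exact hc h
        · exact disj_mem hYZ x h hc
      · rintro (⟨hc, -⟩ | hc)
        · exact disj_mem (hVA t ht) x h hc
        · exact disj_mem hZV.symm x h hc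
    have h3 : 2 ≤ (σ (A t))ᶜ.card := by
      calc 2 ≤ Y.card + V.card := by
              have := Finset.card_pos.2 hYne
              have := Finset.card_pos.2 hVne
              omega
        _ = (Y ∪ V).card := (Finset.card_union_of_disjoint hYV).symm
        _ ≤ _ := Finset.card_le_card hYVsub
    rw [gfun, if_pos ⟨h1, h3⟩, Finset.card_compl, Fintype.card_fin, hcard2 t ht]
  -- the ℕ-level strict inequality on the chain sums
  have hYle : ∀ t ≤ k, Y.card ≤ (A t).card := fun t ht => Finset.card_le_card (hYA t ht)
  have hAle : ∀ t ≤ k, (A t).card ≤ n := by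
    intro t ht
    have := Finset.card_le_univ (A t)
    rwa [Fintype.card_fin] at this
  have hσAle : ∀ t ≤ k, (A t).card - Y.card + Z.card ≤ n := by
    intro t ht
    have := Finset.card_le_univ (σ (A t))
    rwa [Fintype.card_fin, hcard2 t ht] at this
  have hnat : ∑ t ∈ Finset.range (k+1), gfun (σ (A t)) <
      ∑ t ∈ Finset.range (k+1), gfun (A t) := by
    have hc1 : ((∑ t ∈ Finset.range (k+1), gfun (σ (A t)) : ℕ) : ℤ) =
        ∑ t ∈ Finset.range (k+1),
          (((A t).card : ℤ) + Z.card - Y.card) *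
            (n - (((A t).card : ℤ) + Z.card - Y.card)) := by
      push_cast
      refine Finset.sum_congr rfl ?_
      intro t ht
      have ht' : t ≤ k := by
        have := Finset.mem_range.1 ht
        omega
      rw [hcard3 t ht']
      have h1 := hYle t ht'
      have h2 := hσAle t ht'
      have e1 : (((A t).card - Y.card + Z.card : ℕ) : ℤ) =
          ((A t).card : ℤ) + Z.card - Y.card := by
        push_cast [Nat.cast_sub h1]
        ring
      have e2 : ((n - ((A t).card - Y.card + Z.card) : ℕ) : ℤ) =
          (n : ℤ) - (((A t).card : ℤ) + Z.card - Y.card) := by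
        rw [Nat.cast_sub h2, e1]
      rw [Nat.cast_mul, e1, e2]
    have hc2 : ((∑ t ∈ Finset.range (k+1), gfun (A t) : ℕ) : ℤ) =
        ∑ t ∈ Finset.range (k+1), ((A t).card : ℤ) * (n - (A t).card) := by
      push_cast
      refine Finset.sum_congr rfl ?_
      intro t ht
      have ht' : t ≤ k := by
        have := Finset.mem_range.1 ht
        omega
      rw [hcard1 t ht', Nat.cast_mul, Nat.cast_sub (hAle t ht')]
    have : ((∑ t ∈ Finset.range (k+1), gfun (σ (A t)) : ℕ) : ℤ) <
        ((∑ t ∈ Finset.range (k+1), gfun (A t) : ℕ) : ℤ) := by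
      rw [hc1, hc2]
      exact hlt
    exact_mod_cast this
  -- the moved sides
  set Sp := T.sides.filter (fun B => Y ⊆ B ∧ Disjoint Z B) with hSpdef
  set Sm := T.sides.filter (fun B => Z ⊆ B ∧ Disjoint Y B) with hSmdef
  have hZc_mem : Zᶜ ∈ T.sides := T.compl_mem Z hZm
  have hYZc : Y ⊆ Zᶜ := fun x hx => Finset.mem_compl.2 (disj_mem hYZ x hx)
  have hSp_eq : Sp = insert Y (insert Zᶜ ((Finset.range (k+1)).image A)) := by
    ext B
    simp only [hSpdef, Finset.mem_filter, Finset.mem_insert, Finset.mem_image,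
      Finset.mem_range]
    constructor
    · rintro ⟨hB, hYB, hZB⟩
      rcases hchar B hB hYB hZB with h|h|⟨t, ht, h⟩
      · exact Or.inl h
      · exact Or.inr (Or.inl h)
      · exact Or.inr (Or.inr ⟨t, by omega, h.symm⟩)
    · rintro (rfl | rfl | ⟨t, ht, rfl⟩)
      · exact ⟨hYm, Finset.Subset.rfl, hYZ.symm⟩
      · exact ⟨hZc_mem, hYZc, disjoint_compl_right⟩
      · exact ⟨hAm t (by omega), hYA t (by omega), hZA t (by omega)⟩
  have hYnotin : Y ∉ insert Zᶜ ((Finset.range (k+1)).image A) := by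
    simp only [Finset.mem_insert, Finset.mem_image, Finset.mem_range]
    rintro (h | ⟨t, ht, h⟩)
    · obtain ⟨v, hv⟩ := hVne
      have h1 : v ∈ Zᶜ := Finset.mem_compl.2 (disj_mem hZV.symm v hv)
      rw [← h] at h1
      exact disj_mem hYV.symm v hv h1
    · obtain ⟨w, hw⟩ := hWne
      have h1 : w ∈ A t := hWA t (by omega) hw
      rw [h] at h1
      exact disj_mem hYW.symm w hw h1
  have hZcnotin : Zᶜ ∉ (Finset.range (k+1)).image A := by
    simp only [Finset.mem_image, Finset.mem_range]
    rintro ⟨t, ht, h⟩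
    obtain ⟨v, hv⟩ := hVne
    have h1 : v ∈ Zᶜ := Finset.mem_compl.2 (disj_mem hZV.symm v hv)
    rw [← h] at h1
    exact disj_mem (hVA t (by omega)).symm v h1 hv
  have hAinj : ∀ a ∈ Finset.range (k+1), ∀ b ∈ Finset.range (k+1), A a = A b → a = b := by
    have key : ∀ s t, s < t → t ≤ k → A s ≠ A t := by
      intro s t hst htk heq
      obtain ⟨u, hu⟩ := hYsne s (by omega)
      have h1 : u ∈ A t := hmono (s+1) t (by omega) htk
        (by rw [hAs s (by omega)]; exact Finset.mem_union_right _ hu)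
      rw [← heq] at h1
      exact disj_mem (hYsA s (by omega) s le_rfl) u hu h1
    intro a ha b hb hab
    have ha' : a ≤ k := Nat.lt_succ_iff.1 (Finset.mem_range.1 ha)
    have hb' : b ≤ k := Nat.lt_succ_iff.1 (Finset.mem_range.1 hb)
    rcases Nat.lt_trichotomy a b with h|h|h
    · exact absurd hab (key a b h hb')
    · exact h
    · exact absurd hab.symm (key b a h ha')
  have hsumSp : ∀ f : Finset (Fin n) → ℕ, ∑ B ∈ Sp, f B =
      f Y + (f Zᶜ + ∑ t ∈ Finset.range (k+1), f (A t)) := by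
    intro f
    rw [hSp_eq, Finset.sum_insert hYnotin, Finset.sum_insert hZcnotin,
      Finset.sum_image hAinj]
  have hσY : σ Y = Z := swap_self_left hYne hZne hYZ
  have hσZc : σ Zᶜ = Yᶜ := by
    rw [hσ, swap_compl hYne hZne hYZ, swap_self_right hYne hZne hYZ]
  have hSm_eq : Sm = Sp.image compl := by
    ext B
    simp only [hSmdef, hSpdef, Finset.mem_filter, Finset.mem_image]
    constructor
    · rintro ⟨hB, hZB, hYB⟩
      exact ⟨Bᶜ, ⟨T.compl_mem B hB, fun x hx => Finset.mem_compl.2 (disj_mem hYB x hx),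
        Finset.disjoint_left.2 fun x hx hc => (Finset.mem_compl.1 hc) (hZB hx)⟩,
        compl_compl B⟩
    · rintro ⟨C, ⟨hC, hYC, hZC⟩, rfl⟩
      exact ⟨T.compl_mem C hC, fun x hx => Finset.mem_compl.2 (disj_mem hZC x hx),
        Finset.disjoint_left.2 fun x hx hc => (Finset.mem_compl.1 hc) (hYC hx)⟩
  have hcomplinj : ∀ a ∈ Sp, ∀ b ∈ Sp, aᶜ = bᶜ → a = b :=
    fun a _ b _ h => compl_injective h
  have hSm1 : ∑ B ∈ Sm, gfun (σ B) = ∑ B ∈ Sp, gfun (σ B) := by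
    rw [hSm_eq, Finset.sum_image hcomplinj]
    refine Finset.sum_congr rfl fun B _ => ?_
    rw [hσ, swap_compl hYne hZne hYZ, gfun_compl]
  have hSm2 : ∑ B ∈ Sm, gfun B = ∑ B ∈ Sp, gfun B := by
    rw [hSm_eq, Finset.sum_image hcomplinj]
    exact Finset.sum_congr rfl fun B _ => gfun_compl B
  -- decomposition of the sums over all sides
  have hSpSm_disj : Disjoint Sp Sm := by
    rw [Finset.disjoint_left]
    intro B hB1 hB2
    rw [hSpdef, Finset.mem_filter] at hB1
    rw [hSmdef, Finset.mem_filter] at hB2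
    obtain ⟨y, hy⟩ := hYne
    exact disj_mem hB2.2.2 y hy (hB1.2.1 hy)
  have hmoved : T.sides.filter
      (fun B => (Y ⊆ B ∧ Disjoint Z B) ∨ (Z ⊆ B ∧ Disjoint Y B)) = Sp ∪ Sm := by
    ext B
    simp only [Finset.mem_filter, Finset.mem_union, hSpdef, hSmdef]
    tauto
  have hdec : ∀ f : Finset (Fin n) → ℕ,
      ∑ B ∈ T.sides, f B = ∑ B ∈ Sp, f B + ∑ B ∈ Sm, f B +
        ∑ B ∈ T.sides.filter
          (fun B => ¬((Y ⊆ B ∧ Disjoint Z B) ∨ (Z ⊆ B ∧ Disjoint Y B))), f B := by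
    intro f
    rw [← Finset.sum_filter_add_sum_filter_not T.sides
      (fun B => (Y ⊆ B ∧ Disjoint Z B) ∨ (Z ⊆ B ∧ Disjoint Y B)) f, hmoved,
      Finset.sum_union hSpSm_disj]
  have hrest : ∑ B ∈ T.sides.filter
        (fun B => ¬((Y ⊆ B ∧ Disjoint Z B) ∨ (Z ⊆ B ∧ Disjoint Y B))), gfun (σ B) =
      ∑ B ∈ T.sides.filter
        (fun B => ¬((Y ⊆ B ∧ Disjoint Z B) ∨ (Z ⊆ B ∧ Disjoint Y B))), gfun B := by
    refine Finset.sum_congr rfl fun B hB => ?_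
    rw [Finset.mem_filter] at hB
    have h2 := not_or.1 hB.2
    rw [hσ, swap_eq_id h2.1 h2.2]
  have hsplt : ∑ B ∈ Sp, gfun (σ B) < ∑ B ∈ Sp, gfun B := by
    have e1 := hsumSp (fun B => gfun (σ B))
    have e2 := hsumSp gfun
    rw [hσY, hσZc, gfun_compl] at e1
    rw [gfun_compl Z] at e2
    omega
  have hkey : ∑ B ∈ T.sides, gfun (σ B) + 2 ≤ ∑ B ∈ T.sides, gfun B := by
    have d1 := hdec (fun B => gfun (σ B))
    have d2 := hdec gfun
    omega
  -- gamma comparison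
  have hγ' : (swapTree T Y Z hYm hZm hYZ).gamma = (∑ B ∈ T.sides, gfun (σ B)) / 2 := by
    rw [gamma_eq_sum, swapTree_sides, Finset.sum_image]
    intro a _ b _ hab
    have h2 := congrArg (swapSide Y Z) hab
    rwa [swap_invol hYne hZne hYZ, swap_invol hYne hZne hYZ] at h2
  have hγ : T.gamma = (∑ B ∈ T.sides, gfun B) / 2 := gamma_eq_sum T
  have hm := hmin (swapTree T Y Z hYm hZm hYZ)
  rw [hγ', hγ] at hm
  omega


end SwapAux

/-- Lemma 9: let `T ∈ 𝒯_n` minimise `Γ` and let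
`X₁,…,X₄,Y₁,…,Y_k` partition the leaf set with each `Xᵢ`, each `Yᵢ`
and each `Aᵢ` (where `A₀ = X₁ ∪ X₂`, `Aᵢ = A_{i−1} ∪ Yᵢ`) a side of a
split of `T`.  Then with `xᵢ = |Xᵢ|`, either `max(x₁,x₂) ≤ min(x₃,x₄)`
or `max(x₃,x₄) ≤ min(x₁,x₂)`. -/
theorem gamma_minimiser_sides_ordered (n k : ℕ) (T : PhyloTree n)
    (hmin : ∀ T' : PhyloTree n, T.gamma ≤ T'.gamma)
    (X : Fin 4 → Finset (Fin n)) (Y : Fin k → Finset (Fin n))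
    (A : Fin (k + 1) → Finset (Fin n))
    (hXdisj : ∀ i j, i ≠ j → Disjoint (X i) (X j))
    (hYdisj : ∀ i j, i ≠ j → Disjoint (Y i) (Y j))
    (hXYdisj : ∀ i j, Disjoint (X i) (Y j))
    (hcover : ((Finset.univ.biUnion X) ∪ (Finset.univ.biUnion Y)) = Finset.univ)
    (hX : ∀ i, X i ∈ T.sides)
    (hY : ∀ i, Y i ∈ T.sides)
    (hA0 : A 0 = X 0 ∪ X 1)
    (hAsucc : ∀ i : Fin k, A i.succ = A i.castSucc ∪ Y i)
    (hA : ∀ i, A i ∈ T.sides) :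
    max (X 0).card (X 1).card ≤ min (X 2).card (X 3).card ∨
      max (X 2).card (X 3).card ≤ min (X 0).card (X 1).card := by
  classical
  set Aℕ : ℕ → Finset (Fin n) := fun t => A ⟨min t k, by omega⟩ with hAℕ
  set Yℕ : ℕ → Finset (Fin n) := fun t => if h : t < k then Y ⟨t, h⟩ else ∅ with hYℕ
  have key : ∀ a b c d : Fin 4, (∀ u : Fin 4, u = a ∨ u = b ∨ u = c ∨ u = d) →
      a ≠ b → a ≠ c → a ≠ d → b ≠ c → b ≠ d → c ≠ d → A 0 = X a ∪ X b →
      ∑ t ∈ Finset.range (k+1), ((Aℕ t).card : ℤ) * (n - (Aℕ t).card) ≤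
        ∑ t ∈ Finset.range (k+1),
          (((Aℕ t).card : ℤ) + (X c).card - (X a).card) *
            (n - (((Aℕ t).card : ℤ) + (X c).card - (X a).card)) := by
    intro a b c d hall hab hac had hbc hbd hcd hA0'
    refine SwapAux.swap_ineq k T hmin (X a) (X b) (X c) (X d) Yℕ Aℕ
      (hX a) (hX b) (hX c) (hX d) (fun t _ => hA _) ?_
      (hXdisj a b hab) (hXdisj a c hac) (hXdisj a d had)
      (hXdisj b c hbc) (hXdisj b d hbd) (hXdisj c d hcd)
      ?_ ?_ ?_ ?_ ?_ ?_ ?_ ?_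
    · intro i hi
      rw [hYℕ]
      simp only [dif_pos hi]
      exact hY _
    · intro i hi
      rw [hYℕ]; simp only [dif_pos hi]
      exact (hXYdisj a ⟨i, hi⟩).symm
    · intro i hi
      rw [hYℕ]; simp only [dif_pos hi]
      exact (hXYdisj b ⟨i, hi⟩).symm
    · intro i hi
      rw [hYℕ]; simp only [dif_pos hi]
      exact (hXYdisj c ⟨i, hi⟩).symm
    · intro i hi
      rw [hYℕ]; simp only [dif_pos hi]
      exact (hXYdisj d ⟨i, hi⟩).symm
    · intro i hi j hj hij
      rw [hYℕ]; simp only [dif_pos hi, dif_pos hj]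
      exact hYdisj ⟨i, hi⟩ ⟨j, hj⟩ (fun h => hij (by simpa [Fin.ext_iff] using h))
    · rw [hAℕ]
      have h0 : (⟨min 0 k, by omega⟩ : Fin (k+1)) = 0 := by
        apply Fin.ext
        simp
      simp only
      rw [h0]
      exact hA0' 
    · intro i hi
      rw [hAℕ, hYℕ]
      simp only [dif_pos hi]
      have e1 : (⟨min (i+1) k, by omega⟩ : Fin (k+1)) = (⟨i, hi⟩ : Fin k).succ := by
        apply Fin.ext
        simp [Fin.val_succ]
        omega
      have e2 : (⟨min i k, by omega⟩ : Fin (k+1)) = (⟨i, hi⟩ : Fin k).castSucc := by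
        apply Fin.ext
        simp [Fin.coe_castSucc]
        omega
      rw [e1, e2, hAsucc ⟨i, hi⟩]
    · intro x
      have hx : x ∈ (Finset.univ.biUnion X) ∪ (Finset.univ.biUnion Y) :=
        hcover ▸ Finset.mem_univ x
      rcases Finset.mem_union.1 hx with h | h
      · obtain ⟨u, -, hu⟩ := Finset.mem_biUnion.1 h
        rcases hall u with rfl|rfl|rfl|rfl
        · exact Or.inl hu
        · exact Or.inr (Or.inl hu)
        · exact Or.inr (Or.inr (Or.inl hu))
        · exact Or.inr (Or.inr (Or.inr (Or.inl hu)))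
      · obtain ⟨u, -, hu⟩ := Finset.mem_biUnion.1 h
        refine Or.inr (Or.inr (Or.inr (Or.inr ⟨u.val, u.isLt, ?_⟩)))
        rw [hYℕ]
        simp only [dif_pos u.isLt]
        rwa [Fin.eta]
  -- convert the four instances of `key` into sign conditions on a quadratic
  set SA : ℤ := ∑ t ∈ Finset.range (k+1), ((Aℕ t).card : ℤ) with hSA
  set P : ℤ := ((k : ℤ)+1) * n - 2 * SA with hP
  have expand : ∀ dd : ℤ, ∑ t ∈ Finset.range (k+1),
      (((Aℕ t).card : ℤ) + dd) * (n - (((Aℕ t).card : ℤ) + dd)) =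
      ∑ t ∈ Finset.range (k+1), ((Aℕ t).card : ℤ) * (n - (Aℕ t).card)
        + (dd * P - ((k : ℤ)+1) * (dd * dd)) := by
    intro dd
    have h1 : ∀ t ∈ Finset.range (k+1),
        (((Aℕ t).card : ℤ) + dd) * (n - (((Aℕ t).card : ℤ) + dd)) =
        ((Aℕ t).card : ℤ) * (n - (Aℕ t).card)
          + (dd * ((n : ℤ) - dd) - 2 * dd * ((Aℕ t).card : ℤ)) := fun t _ => by ring
    rw [Finset.sum_congr rfl h1, Finset.sum_add_distrib, Finset.sum_sub_distrib,
      Finset.sum_const, Finset.card_range, ← Finset.mul_sum, ← hSA]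
    push_cast
    rw [hP]
    ring
  have hQ : ∀ a b c d : Fin 4, (∀ u : Fin 4, u = a ∨ u = b ∨ u = c ∨ u = d) →
      a ≠ b → a ≠ c → a ≠ d → b ≠ c → b ≠ d → c ≠ d → A 0 = X a ∪ X b →
      0 ≤ (((X c).card : ℤ) - (X a).card) * P -
        ((k : ℤ)+1) * ((((X c).card : ℤ) - (X a).card) * (((X c).card : ℤ) - (X a).card)) := by
    intro a b c d hall hab hac had hbc hbd hcd hA0'
    have K := key a b c d hall hab hac had hbc hbd hcd hA0'
    have e2 : ∑ t ∈ Finset.range (k+1),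
        (((Aℕ t).card : ℤ) + (X c).card - (X a).card) *
          (n - (((Aℕ t).card : ℤ) + (X c).card - (X a).card)) =
        ∑ t ∈ Finset.range (k+1),
        (((Aℕ t).card : ℤ) + (((X c).card : ℤ) - (X a).card)) *
          (n - (((Aℕ t).card : ℤ) + (((X c).card : ℤ) - (X a).card))) :=
      Finset.sum_congr rfl fun t _ => by ring
    have e3 := expand (((X c).card : ℤ) - (X a).card)
    rw [e2, e3] at K
    linarith
  have Q1 := hQ 0 1 2 3 (by decide) (by decide) (by decide) (by decide) (by decide)
    (by decide) (by decide) hA0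
  have Q2 := hQ 0 1 3 2 (by decide) (by decide) (by decide) (by decide) (by decide)
    (by decide) (by decide) hA0
  have Q3 := hQ 1 0 2 3 (by decide) (by decide) (by decide) (by decide) (by decide)
    (by decide) (by decide) (by rw [hA0, Finset.union_comm])
  have Q4 := hQ 1 0 3 2 (by decide) (by decide) (by decide) (by decide) (by decide)
    (by decide) (by decide) (by rw [hA0, Finset.union_comm])
  by_contra hgoal
  push_neg at hgoal
  obtain ⟨hg1, hg2⟩ := hgoal
  -- positive-difference witness gives P > 0
  have hkpos : (1 : ℤ) ≤ (k : ℤ) + 1 := by omega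
  have hPpos : 0 < P := by
    have hwit : ∃ dd : ℤ, 1 ≤ dd ∧
        0 ≤ dd * P - ((k : ℤ)+1) * (dd * dd) := by
      rcases min_lt_iff.1 hg2 with h | h <;> rcases lt_max_iff.1 h with h' | h'
      · exact ⟨((X 2).card : ℤ) - (X 0).card, by omega, Q1⟩
      · exact ⟨((X 3).card : ℤ) - (X 0).card, by omega, Q2⟩
      · exact ⟨((X 2).card : ℤ) - (X 1).card, by omega, Q3⟩
      · exact ⟨((X 3).card : ℤ) - (X 1).card, by omega, Q4⟩
    obtain ⟨dd, hdd1, hdd2⟩ := hwit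
    have hsq : (1 : ℤ) ≤ dd * dd := by nlinarith
    have h1 : (1 : ℤ) ≤ ((k : ℤ)+1) * (dd * dd) := by nlinarith
    have h2 : 0 < dd * P := by linarith
    by_contra hc
    push_neg at hc
    have := mul_nonpos_of_nonneg_of_nonpos (by linarith : (0:ℤ) ≤ dd) hc
    linarith
  have hPneg : P < 0 := by
    have hwit : ∃ dd : ℤ, dd ≤ -1 ∧
        0 ≤ dd * P - ((k : ℤ)+1) * (dd * dd) := by
      rcases min_lt_iff.1 hg1 with h | h <;> rcases lt_max_iff.1 h with h' | h'
      · exact ⟨((X 2).card : ℤ) - (X 0).card, by omega, Q1⟩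
      · exact ⟨((X 2).card : ℤ) - (X 1).card, by omega, Q3⟩
      · exact ⟨((X 3).card : ℤ) - (X 0).card, by omega, Q2⟩
      · exact ⟨((X 3).card : ℤ) - (X 1).card, by omega, Q4⟩
    obtain ⟨dd, hdd1, hdd2⟩ := hwit
    have hsq : (1 : ℤ) ≤ dd * dd := by nlinarith
    have h1 : (1 : ℤ) ≤ ((k : ℤ)+1) * (dd * dd) := by nlinarith
    have h2 : 0 < dd * P := by linarith
    by_contra hc
    push_neg at hc
    have := mul_nonpos_of_nonpos_of_nonneg (by linarith : dd ≤ (0:ℤ)) hc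
    linarith
  linarith
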